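/- Fix d ≥ 1. Let ρ > 0, θ > 0, h > 0, E′ > 0, and v ∈ ℝ^d with ‖v‖ < 1, and suppose Δ := ρh² − ρθh(2+‖v‖²) + ρθ²(1+E′) > 0. Define δ₁ = ρ(h² + θh‖v‖² + θ²(1+E′)), δ₂ = ρ(h²‖v‖² + θh + θ²(1+E′)‖v‖²), δ₃ = ρ(h² + (2−‖v‖²)θh + θ²(1+E′)). Then the symmetric (d+1)×(d+1) block matrix A₂ = [[Δ(1−‖v‖²) I_d + δ₃ v vᵀ, −δ₁ v], [−δ₁ vᵀ, δ₂]] is positive definite. In particular, the Schur-complement matrix C = Δ(1−‖v‖²) I_d + (δ₃ − δ₁²/δ₂) v vᵀ has eigenvalues Δ(1−‖v‖²) (with multiplicity d−1) and ρθh(1−‖v‖²)²Δ/δ₂, all positive. -/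

import Mathlib

set_option maxHeartbeats 1000000
open Matrix

/-- The key linear-algebra lemma in the convexity proof of the entropy for RHD:
the block matrix `A₂ = [[Δ(1−‖v‖²)I_d + δ₃vvᵀ, −δ₁v],[−δ₁vᵀ, δ₂]]` is positive definite,
and the Schur-complement matrix `C = Δ(1−‖v‖²)I_d + (δ₃ − δ₁²/δ₂)vvᵀ` has `v` as an
eigenvector with eigenvalue `ρθh(1−‖v‖²)²Δ/δ₂`, every vector orthogonal to `v` as an
eigenvector with eigenvalue `Δ(1−‖v‖²)`, and both eigenvalues are positive. -/
theorem stmt5 (d : ℕ) (hd : 1 ≤ d) (ρ θ h E' : ℝ) (v : Fin d → ℝ)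
    (hρ : 0 < ρ) (hθ : 0 < θ) (hh : 0 < h) (hE : 0 < E')
    (hv : ∑ j, v j ^ 2 < 1)
    (hΔ : 0 < ρ * h ^ 2 - ρ * θ * h * (2 + ∑ j, v j ^ 2) + ρ * θ ^ 2 * (1 + E')) :
    let s : ℝ := ∑ j, v j ^ 2
    let Δ : ℝ := ρ * h ^ 2 - ρ * θ * h * (2 + s) + ρ * θ ^ 2 * (1 + E')
    let δ₁ : ℝ := ρ * (h ^ 2 + θ * h * s + θ ^ 2 * (1 + E'))
    let δ₂ : ℝ := ρ * (h ^ 2 * s + θ * h + θ ^ 2 * (1 + E') * s)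
    let δ₃ : ℝ := ρ * (h ^ 2 + (2 - s) * θ * h + θ ^ 2 * (1 + E'))
    let A₂ : Matrix (Fin d ⊕ Fin 1) (Fin d ⊕ Fin 1) ℝ :=
      Matrix.of fun k l =>
        match k, l with
        | Sum.inl i, Sum.inl j => Δ * (1 - s) * (if i = j then 1 else 0) + δ₃ * v i * v j
        | Sum.inl i, Sum.inr _ => -(δ₁ * v i)
        | Sum.inr _, Sum.inl j => -(δ₁ * v j)
        | Sum.inr _, Sum.inr _ => δ₂
    let C : Matrix (Fin d) (Fin d) ℝ :=
      Matrix.of fun i j =>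
        Δ * (1 - s) * (if i = j then 1 else 0) + (δ₃ - δ₁ ^ 2 / δ₂) * v i * v j
    A₂.PosDef ∧
      C *ᵥ v = (ρ * θ * h * (1 - s) ^ 2 * Δ / δ₂) • v ∧
      (∀ w : Fin d → ℝ, w ⬝ᵥ v = 0 → C *ᵥ w = (Δ * (1 - s)) • w) ∧
      0 < Δ * (1 - s) ∧ 0 < ρ * θ * h * (1 - s) ^ 2 * Δ / δ₂ := by
  intro s Δ δ₁ δ₂ δ₃ A₂ C
  have hs0 : 0 ≤ s := Finset.sum_nonneg fun j _ => sq_nonneg _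
  have hs1 : s < 1 := hv
  have hΔ0 : 0 < Δ := hΔ
  have hδ₂ : 0 < δ₂ := by
    have h1 : 0 ≤ h ^ 2 * s := mul_nonneg (sq_nonneg _) hs0
    have h2 : 0 ≤ θ ^ 2 * (1 + E') * s := by
      apply mul_nonneg (by positivity) hs0
    have h3 : 0 < θ * h := mul_pos hθ hh
    simp only [δ₂]
    nlinarith
  have hδ₂' : δ₂ ≠ 0 := ne_of_gt hδ₂
  -- the key polynomial identity
  have hkey : Δ * (1 - s) * δ₂ + (δ₃ * δ₂ - δ₁ ^ 2) * s = ρ * θ * h * (1 - s) ^ 2 * Δ := by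
    simp only [Δ, δ₁, δ₂, δ₃]
    ring
  have hlam1 : 0 < Δ * (1 - s) := mul_pos hΔ0 (by linarith)
  have hK : 0 < ρ * θ * h * (1 - s) ^ 2 * Δ := by
    have h2 : (0:ℝ) < (1 - s) ^ 2 := pow_pos (by linarith) 2
    exact mul_pos (mul_pos (mul_pos (mul_pos hρ hθ) hh) h2) hΔ0
  have hlam2 : 0 < ρ * θ * h * (1 - s) ^ 2 * Δ / δ₂ := div_pos hK hδ₂
  -- eigenvalue identity
  have hev : Δ * (1 - s) + (δ₃ - δ₁ ^ 2 / δ₂) * s = ρ * θ * h * (1 - s) ^ 2 * Δ / δ₂ := by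
    field_simp
    linear_combination hkey
  -- action of C on a general vector
  have hC : ∀ (x : Fin d → ℝ) (i : Fin d),
      (C *ᵥ x) i = Δ * (1 - s) * x i + (δ₃ - δ₁ ^ 2 / δ₂) * v i * (∑ j, v j * x j) := by
    intro x i
    simp only [C, Matrix.mulVec, dotProduct, Matrix.of_apply, add_mul]
    rw [Finset.sum_add_distrib]
    congr 1
    · simp [mul_ite, Finset.sum_ite_eq, mul_comm]
    · rw [Finset.mul_sum]
      exact Finset.sum_congr rfl fun j _ => by ring
  have hvv : ∑ j, v j * v j = s := Finset.sum_congr rfl fun j _ => (pow_two (v j)).symm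
  refine ⟨?_, ?_, ?_, hlam1, hlam2⟩
  · -- positive definiteness of A₂
    rw [Matrix.posDef_iff_dotProduct_mulVec]
    constructor
    · -- Hermitian
      ext k l
      rcases k with i | i <;> rcases l with j | j <;>
        simp only [A₂, Matrix.conjTranspose_apply, Matrix.of_apply, star_trivial]
      rcases eq_or_ne i j with rfl | hne
      · ring
      · simp [hne, hne.symm]
        ring
    · intro x hx
      rw [star_trivial]
      have hAl : ∀ i, (A₂ *ᵥ x) (Sum.inl i) =
          Δ * (1 - s) * x (Sum.inl i) + δ₃ * v i * (∑ j, v j * x (Sum.inl j))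
            - δ₁ * v i * x (Sum.inr 0) := by
        intro i
        simp only [A₂, Matrix.mulVec, dotProduct, Matrix.of_apply, Fintype.sum_sum_type,
          Fin.sum_univ_one, add_mul]
        rw [Finset.sum_add_distrib]
        have h1 : ∑ j, Δ * (1 - s) * (if i = j then 1 else 0) * x (Sum.inl j)
            = Δ * (1 - s) * x (Sum.inl i) := by
          simp [mul_ite, Finset.sum_ite_eq]
        have h2 : ∑ j, δ₃ * v i * v j * x (Sum.inl j)
            = δ₃ * v i * (∑ j, v j * x (Sum.inl j)) := by
          rw [Finset.mul_sum]
          exact Finset.sum_congr rfl fun j _ => by ring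
        rw [h1, h2]
        ring
      have hAr : (A₂ *ᵥ x) (Sum.inr 0) =
          -(δ₁ * (∑ j, v j * x (Sum.inl j))) + δ₂ * x (Sum.inr 0) := by
        simp only [A₂, Matrix.mulVec, dotProduct, Matrix.of_apply, Fintype.sum_sum_type,
          Fin.sum_univ_one]
        congr 1
        rw [Finset.sum_congr rfl (fun j _ => show -(δ₁ * v j) * x (Sum.inl j)
          = -(δ₁ * (v j * x (Sum.inl j))) by ring),
          Finset.sum_neg_distrib, Finset.mul_sum]
      set U : ℝ := ∑ i, x (Sum.inl i) ^ 2 with hUdef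
      set a : ℝ := ∑ j, v j * x (Sum.inl j) with hadef
      set t : ℝ := x (Sum.inr 0) with htdef
      have hQ : x ⬝ᵥ (A₂ *ᵥ x) =
          Δ * (1 - s) * U + δ₃ * a ^ 2 - 2 * δ₁ * a * t + δ₂ * t ^ 2 := by
        simp only [dotProduct, Fintype.sum_sum_type, Fin.sum_univ_one, hAl, hAr, ← htdef]
        have expand : ∀ i, x (Sum.inl i) *
            (Δ * (1 - s) * x (Sum.inl i) + δ₃ * v i * a - δ₁ * v i * t)
            = Δ * (1 - s) * x (Sum.inl i) ^ 2 + δ₃ * a * (v i * x (Sum.inl i))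
              - δ₁ * t * (v i * x (Sum.inl i)) := fun i => by ring
        rw [Finset.sum_congr rfl fun i _ => expand i, Finset.sum_sub_distrib,
          Finset.sum_add_distrib, ← Finset.mul_sum, ← Finset.mul_sum, ← Finset.mul_sum,
          ← hUdef, ← hadef]
        ring
      have hcs : a ^ 2 ≤ s * U :=
        Finset.sum_mul_sq_le_sq_mul_sq Finset.univ v (fun i => x (Sum.inl i))
      have hU0 : 0 ≤ U := Finset.sum_nonneg fun i _ => sq_nonneg _
      rw [hQ]
      rcases eq_or_lt_of_le hU0 with hU | hU
      · -- U = 0, so a = 0 and t ≠ 0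
        have ha : a = 0 := by
          have h2 : a ^ 2 ≤ 0 := by rw [← hU] at hcs; linarith [hcs]
          have := le_antisymm h2 (sq_nonneg a)
          exact sq_eq_zero_iff.mp this
        have hxl : ∀ i, x (Sum.inl i) = 0 := by
          intro i
          have := (Finset.sum_eq_zero_iff_of_nonneg
            (fun i _ => sq_nonneg (x (Sum.inl i)))).mp hU.symm i (Finset.mem_univ i)
          exact sq_eq_zero_iff.mp this
        have ht : t ≠ 0 := by
          intro h0
          apply hx
          funext k
          rcases k with i | i
          · exact hxl i
          · rw [Subsingleton.elim i 0]
            exact h0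
        have ht2 : 0 < t ^ 2 := lt_of_le_of_ne (sq_nonneg t) (Ne.symm (pow_ne_zero 2 ht))
        rw [ha, ← hU]
        have := mul_pos hδ₂ ht2
        nlinarith
      · -- U > 0
        have e : δ₂ * (Δ * (1 - s) * U + δ₃ * a ^ 2 - 2 * δ₁ * a * t + δ₂ * t ^ 2)
            = (δ₂ * t - δ₁ * a) ^ 2 + Δ * (1 - s) * δ₂ * U + (δ₃ * δ₂ - δ₁ ^ 2) * a ^ 2 := by
          ring
        have hkeyU : (Δ * (1 - s) * δ₂ + (δ₃ * δ₂ - δ₁ ^ 2) * s) * U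
            = (ρ * θ * h * (1 - s) ^ 2 * Δ) * U := by rw [hkey]
        have hpos : 0 < δ₂ * (Δ * (1 - s) * U + δ₃ * a ^ 2 - 2 * δ₁ * a * t + δ₂ * t ^ 2) := by
          rw [e]
          rcases le_or_gt 0 (δ₃ * δ₂ - δ₁ ^ 2) with hsign | hsign
          · have h1 : 0 ≤ (δ₃ * δ₂ - δ₁ ^ 2) * a ^ 2 := mul_nonneg hsign (sq_nonneg a)
            have h2 : 0 < Δ * (1 - s) * δ₂ * U := by positivity
            nlinarith [sq_nonneg (δ₂ * t - δ₁ * a)]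
          · have h1 : (δ₃ * δ₂ - δ₁ ^ 2) * (s * U) ≤ (δ₃ * δ₂ - δ₁ ^ 2) * a ^ 2 :=
              mul_le_mul_of_nonpos_left hcs (le_of_lt hsign)
            have h2 : 0 < (ρ * θ * h * (1 - s) ^ 2 * Δ) * U := mul_pos hK hU
            nlinarith [sq_nonneg (δ₂ * t - δ₁ * a)]
        nlinarith [hpos, hδ₂]
  · -- C *ᵥ v = λ₂ • v
    funext i
    rw [hC v i, hvv]
    simp only [Pi.smul_apply, smul_eq_mul]
    linear_combination v i * hev
  · -- orthogonal eigenvectors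
    intro w hw
    have hw' : ∑ j, v j * w j = 0 := by
      rw [← hw]
      exact Finset.sum_congr rfl fun j _ => mul_comm _ _
    funext i
    rw [hC w i, hw']
    simp [mul_comm]
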